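/- A Petri net N with incidence matrix I is not structurally bounded if and only if there exists a rational vector Y ≥ 0, Y ≠ 0, with I·Y ≥ 0 and I·Y ≠ 0 (i.e., I·Y ⪈ 0), where Y ranges over ℚ^T with nonnegative entries. -/

import Mathlib

open Classical

structure PetriNet (P T : Type) where
  pre  : P → T → ℕ
  post : T → P → ℕ

namespace PetriNet

variable {P T : Type}

def enabled (N : PetriNet P T) (M : P → ℕ) (t : T) : Prop :=
  ∀ p, N.pre p t ≤ M p

def fire (N : PetriNet P T) (M : P → ℕ) (t : T) : P → ℕ :=
  fun p => M p - N.pre p t + N.post t p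

def feasible (N : PetriNet P T) : (P → ℕ) → List T → Prop
  | _, [] => True
  | M, t :: σ => N.enabled M t ∧ N.feasible (N.fire M t) σ

def fireSeq (N : PetriNet P T) : (P → ℕ) → List T → (P → ℕ)
  | M, [] => M
  | M, t :: σ => N.fireSeq (N.fire M t) σ

/-- `M'` is reachable from `M` by some feasible firing sequence. -/
def reach (N : PetriNet P T) (M M' : P → ℕ) : Prop :=
  ∃ σ : List T, N.feasible M σ ∧ N.fireSeq M σ = M'

/-- Liveness: from every reachable marking, every transition can eventually be enabled. -/
def live (N : PetriNet P T) (M0 : P → ℕ) : Prop :=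
  ∀ M, N.reach M0 M → ∀ t, ∃ M', N.reach M M' ∧ N.enabled M' t

def incidence (N : PetriNet P T) (p : P) (t : T) : ℤ :=
  (N.post t p : ℤ) - (N.pre p t : ℤ)

/-- Potential reachability: the state equation `M = M0 + I·Y` has a solution `Y ∈ ℕ^T`. -/
def potReach [Fintype T] (N : PetriNet P T) (M0 M : P → ℕ) : Prop :=
  ∃ Y : T → ℕ, ∀ p, (M p : ℤ) = (M0 p : ℤ) + ∑ t, N.incidence p t * (Y t : ℤ)

/-- A siphon: a nonempty set of places whose set of input transitions is
included in its set of output transitions. -/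
def siphon (N : PetriNet P T) (D : Set P) : Prop :=
  D.Nonempty ∧ ∀ t, (∃ p ∈ D, 0 < N.post t p) → ∃ p ∈ D, 0 < N.pre p t

/-- `D` is deadlocked at `M`: every place of `D` marks below each of its output weights. -/
def deadlockedAt (N : PetriNet P T) (D : Set P) (M : P → ℕ) : Prop :=
  ∀ p ∈ D, ∀ t, 0 < N.pre p t → M p < N.pre p t

def reversible (N : PetriNet P T) (M0 : P → ℕ) : Prop :=
  ∀ M, N.reach M0 M → N.reach M M0

def deadlockable (N : PetriNet P T) (M0 : P → ℕ) : Prop :=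
  ∃ M, N.reach M0 M ∧ ∀ t, ¬ N.enabled M t

def bounded (N : PetriNet P T) (M0 : P → ℕ) : Prop :=
  ∃ k, ∀ M, N.reach M0 M → ∀ p, M p ≤ k

def structBounded (N : PetriNet P T) : Prop :=
  ∀ M0 : P → ℕ, N.bounded M0

/-- All output weights of each place are equal. -/
def homogeneous (N : PetriNet P T) : Prop :=
  ∀ p t t', 0 < N.pre p t → 0 < N.pre p t' → N.pre p t = N.pre p t'

/-- A place with at least two output transitions. -/
def sharedPlace (N : PetriNet P T) (p : P) : Prop :=
  ∃ t t', t ≠ t' ∧ 0 < N.pre p t ∧ 0 < N.pre p t'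

/-- Homogeneous net with at most one shared place. -/
def H1S (N : PetriNet P T) : Prop :=
  N.homogeneous ∧ ∀ p q, N.sharedPlace p → N.sharedPlace q → p = q

/-- H1S net such that deleting the shared place (if any) yields a WMG≤ :
every non-shared place has at most one input and at most one output transition. -/
def H1S_WMGle (N : PetriNet P T) : Prop :=
  N.H1S ∧ ∀ p, ¬ N.sharedPlace p →
    (∀ t t', 0 < N.post t p → 0 < N.post t' p → t = t') ∧
    (∀ t t', 0 < N.pre p t → 0 < N.pre p t' → t = t')

end PetriNet

namespace PetriNet

variable {P T : Type}

-- AUX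

lemma feasible_append (N : PetriNet P T) (M : P → ℕ) (α β : List T) :
    N.feasible M (α ++ β) ↔ N.feasible M α ∧ N.feasible (N.fireSeq M α) β := by
  induction α generalizing M with
  | nil => simp [feasible, fireSeq]
  | cons t α ih => simp [feasible, fireSeq, ih, and_assoc]

lemma fireSeq_append (N : PetriNet P T) (M : P → ℕ) (α β : List T) :
    N.fireSeq M (α ++ β) = N.fireSeq (N.fireSeq M α) β := by
  induction α generalizing M with
  | nil => simp [fireSeq]
  | cons t α ih => simp [fireSeq, ih]

lemma fire_int (N : PetriNet P T) (M : P → ℕ) (t : T) (h : N.enabled M t) (p : P) :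
    ((N.fire M t) p : ℤ) = (M p : ℤ) + N.incidence p t := by
  have := h p
  simp only [fire, incidence]
  push_cast [Nat.sub_add_comm, this]
  ring

lemma stateEq [Fintype T] (N : PetriNet P T) (σ : List T) :
    ∀ M : P → ℕ, N.feasible M σ → ∀ p,
      ((N.fireSeq M σ) p : ℤ) = (M p : ℤ) + ∑ t, N.incidence p t * (σ.count t : ℤ) := by
  induction σ with
  | nil => intro M _ p; simp [fireSeq]
  | cons t σ ih =>
    intro M hf p
    have h1 := ih (N.fire M t) hf.2 p
    rw [fireSeq, h1, N.fire_int M t hf.1 p]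
    have : ∀ u : T, ((t :: σ).count u : ℤ) = (σ.count u : ℤ) + if u = t then 1 else 0 := by
      intro u
      rw [List.count_cons]
      by_cases h : t = u
      · simp [h]
      · simp [h]; intro hh; exact h hh.symm
    simp only [this, mul_add]
    rw [Finset.sum_add_distrib]
    have : ∑ u, N.incidence p u * (if u = t then (1:ℤ) else 0) = N.incidence p t := by
      simp [mul_ite]
    rw [this]; ring

lemma feas_of_ge_sum (N : PetriNet P T) (σ : List T) :
    ∀ M : P → ℕ, (∀ p, (σ.map (fun t => N.pre p t)).sum ≤ M p) → N.feasible M σ := by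
  induction σ with
  | nil => intro M _; trivial
  | cons t σ ih =>
    intro M h
    have hen : N.enabled M t := by
      intro p
      have := h p
      simp only [List.map_cons, List.sum_cons] at this
      omega
    refine ⟨hen, ih _ fun p => ?_⟩
    have := h p
    simp only [List.map_cons, List.sum_cons] at this
    simp only [fire]
    omega

lemma reach_trans (N : PetriNet P T) {M0 M1 M2 : P → ℕ}
    (h1 : N.reach M0 M1) (h2 : N.reach M1 M2) : N.reach M0 M2 := by
  obtain ⟨α, hα, rfl⟩ := h1
  obtain ⟨β, hβ, rfl⟩ := h2
  exact ⟨α ++ β, (N.feasible_append _ _ _).2 ⟨hα, hβ⟩, N.fireSeq_append _ _ _⟩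

end PetriNet

variable {P T : Type}


lemma scale [Fintype T] (Y : T → ℚ) (hY : ∀ t, 0 ≤ Y t) :
    ∃ (Z : T → ℕ) (d : ℕ), 0 < d ∧ ∀ t, (Z t : ℚ) = d * Y t := by
  classical
  set d := ∏ t, (Y t).den with hd
  have hdpos : 0 < d := Finset.prod_pos (fun t _ => (Y t).pos)
  refine ⟨fun t => ((d / (Y t).den) * (Y t).num.toNat), d, hdpos, fun t => ?_⟩
  obtain ⟨m, hm⟩ : (Y t).den ∣ d := Finset.dvd_prod_of_mem _ (Finset.mem_univ t)
  have hnum : 0 ≤ (Y t).num := Rat.num_nonneg.2 (hY t)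
  have hq : d / (Y t).den = m := by rw [hm]; exact Nat.mul_div_cancel_left _ (Y t).pos
  have hden : ((Y t).den : ℚ) ≠ 0 := by
    exact_mod_cast (Y t).pos.ne'
  have h2 : ((Y t).den : ℚ) * Y t = (Y t).num := by
    nth_rewrite 2 [← Rat.num_div_den (Y t)]
    field_simp
  show (((d / (Y t).den) * (Y t).num.toNat : ℕ) : ℚ) = d * Y t
  rw [hq, hm]
  push_cast [Int.toNat_of_nonneg hnum]
  rw [mul_comm ((Y t).den : ℚ) (m : ℚ), mul_assoc, h2,
    show ((Y t).num.toNat : ℚ) = ((Y t).num : ℚ) by exact_mod_cast Int.toNat_of_nonneg hnum]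

lemma sum_map_flatMap_replicate (Z : T → ℕ) (g : T → ℕ) (l : List T) :
    ((l.flatMap (fun t => List.replicate (Z t) t)).map g).sum
      = (l.map (fun t => Z t * g t)).sum := by
  induction l with
  | nil => simp
  | cons a l ih => simp [List.flatMap_cons, ih, List.map_replicate, List.sum_replicate, smul_eq_mul]

lemma not_structBounded_of_vec [Fintype P] [Fintype T] (N : PetriNet P T) (Z : T → ℕ)
    (hpos : ∀ p, 0 ≤ ∑ t, N.incidence p t * (Z t : ℤ)) (p0 : P)
    (hp0 : 0 < ∑ t, N.incidence p0 t * (Z t : ℤ)) : ¬ N.structBounded := by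
  classical
  set A : P → ℤ := fun p => ∑ t, N.incidence p t * (Z t : ℤ) with hA
  set M0 : P → ℕ := fun p => ∑ t, Z t * N.pre p t with hM0
  set σ0 : List T := Finset.univ.toList.flatMap (fun t => List.replicate (Z t) t) with hσ0
  have hcount : ∀ t, σ0.count t = Z t := by
    intro t
    rw [hσ0, List.count_flatMap, Finset.sum_map_toList]
    have : ∀ u : T, (List.count t ∘ fun u => List.replicate (Z u) u) u
        = if u = t then Z u else 0 := by
      intro u
      simp only [Function.comp_apply]
      by_cases h : u = t
      · subst h; simp [List.count_replicate_self]
      · have h2 : ¬ t = u := fun hh => h hh.symm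
        simp [List.count_replicate, h, h2]
    rw [Finset.sum_congr rfl fun u _ => this u]
    simp
  have hsum : ∀ p, (σ0.map (fun u => N.pre p u)).sum = M0 p := by
    intro p
    rw [hσ0, sum_map_flatMap_replicate, Finset.sum_map_toList]
  set Ms : ℕ → (P → ℕ) := fun n => Nat.rec M0 (fun _ M => N.fireSeq M σ0) n with hMs
  have key : ∀ n, N.reach M0 (Ms n) ∧ ∀ p, ((Ms n) p : ℤ) = (M0 p : ℤ) + n * A p := by
    intro n
    induction n with
    | zero =>
      refine ⟨⟨[], trivial, rfl⟩, fun p => ?_⟩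
      show ((M0 p : ℕ) : ℤ) = (M0 p : ℤ) + 0 * A p
      ring
    | succ n ih =>
      obtain ⟨hr, hs⟩ := ih
      have hge : ∀ p, M0 p ≤ Ms n p := by
        intro p
        have h1 := hs p
        have h2 : 0 ≤ (n : ℤ) * A p := mul_nonneg (by positivity) (hpos p)
        omega
      have hfeas : N.feasible (Ms n) σ0 := N.feas_of_ge_sum σ0 (Ms n) fun p => by
        rw [hsum p]; exact hge p
      have hstep : Ms (n + 1) = N.fireSeq (Ms n) σ0 := rfl
      refine ⟨N.reach_trans hr ⟨σ0, hfeas, hstep.symm⟩, fun p => ?_⟩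
      rw [hstep, N.stateEq σ0 (Ms n) hfeas p, hs p]
      have : ∑ t, N.incidence p t * ((σ0.count t : ℕ) : ℤ) = A p := by
        simp only [hcount]; rfl
      rw [this]
      push_cast
      ring
  intro hsb
  obtain ⟨k, hk⟩ := hsb M0
  obtain ⟨hr, hs⟩ := key (k + 1)
  have h1 := hk (Ms (k + 1)) hr p0
  have h2 := hs p0
  have h3 : (k + 1 : ℤ) * 1 ≤ (k + 1 : ℤ) * A p0 :=
    mul_le_mul_of_nonneg_left hp0 (by positivity)
  push_cast at h2
  omega

def simpleSeq (N : PetriNet P T) (M : P → ℕ) (σ : List T) : Prop :=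
  ∀ i j, i < j → j ≤ σ.length → N.fireSeq M (σ.take i) ≠ N.fireSeq M (σ.take j)

lemma take_eq_of_prefix {α : Type*} {σ τ : List α} (h : σ <+: τ) {i : ℕ} (hi : i ≤ σ.length) :
    σ.take i = τ.take i := by
  have h1 : σ.take i <+: τ := (List.take_prefix i σ).trans h
  rw [List.prefix_iff_eq_take.1 h1, List.length_take, min_eq_left hi]

lemma feasible_prefix (N : PetriNet P T) {M : P → ℕ} {σ τ : List T} (h : σ <+: τ)
    (hf : N.feasible M τ) : N.feasible M σ := by
  obtain ⟨rest, rfl⟩ := h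
  exact ((N.feasible_append M σ rest).1 hf).1

lemma exists_simple (N : PetriNet P T) (M : P → ℕ) :
    ∀ n (σ : List T), σ.length ≤ n → N.feasible M σ →
      ∃ σ', N.feasible M σ' ∧ N.fireSeq M σ' = N.fireSeq M σ ∧ simpleSeq N M σ' := by
  intro n
  induction n with
  | zero =>
    intro σ hlen hf
    refine ⟨σ, hf, rfl, fun i j hij hj => ?_⟩
    omega
  | succ n ih =>
    intro σ hlen hf
    by_cases hs : simpleSeq N M σ
    · exact ⟨σ, hf, rfl, hs⟩
    · simp only [simpleSeq, not_forall] at hs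
      obtain ⟨i, j, hij, hjle, heq⟩ := hs
      rw [not_ne_iff] at heq
      set σ' := σ.take i ++ σ.drop j with hσ'
      have hdecomp : σ = σ.take j ++ σ.drop j := (List.take_append_drop j σ).symm
      have hfeas1 : N.feasible M (σ.take i) :=
        feasible_prefix N (List.take_prefix i σ) hf
      have hfeas2 : N.feasible (N.fireSeq M (σ.take j)) (σ.drop j) := by
        have := (N.feasible_append M (σ.take j) (σ.drop j)).1 (hdecomp ▸ hf)
        exact this.2
      have hfeas' : N.feasible M σ' := by
        rw [hσ', N.feasible_append]
        exact ⟨hfeas1, heq ▸ hfeas2⟩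
      have hfire' : N.fireSeq M σ' = N.fireSeq M σ := by
        rw [hσ', N.fireSeq_append, heq, ← N.fireSeq_append, ← hdecomp]
      have hlen' : σ'.length ≤ n := by
        rw [hσ']
        simp only [List.length_append, List.length_take, List.length_drop]
        omega
      obtain ⟨σ'', h1, h2, h3⟩ := ih σ' hlen' hfeas'
      exact ⟨σ'', h1, h2.trans hfire', h3⟩

lemma exists_vec_of_unbounded [Fintype P] [Fintype T] (N : PetriNet P T) (M0 : P → ℕ)
    (hub : ¬ N.bounded M0) :
    ∃ Y : T → ℕ, (∃ t, Y t ≠ 0) ∧ (∀ p, 0 ≤ ∑ t, N.incidence p t * (Y t : ℤ)) ∧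
      (∃ p, 0 < ∑ t, N.incidence p t * (Y t : ℤ)) := by
  classical
  -- the set of reachable markings is infinite
  have hRinf : {M | N.reach M0 M}.Infinite := by
    by_contra h
    rw [Set.not_infinite] at h
    apply hub
    refine ⟨h.toFinset.sup (fun M => Finset.univ.sup M), fun M hM p => ?_⟩
    exact le_trans (Finset.le_sup (Finset.mem_univ p))
      (Finset.le_sup (h.mem_toFinset.2 hM))
  -- the set of simple feasible sequences is infinite
  set S : Set (List T) := {σ | N.feasible M0 σ ∧ simpleSeq N M0 σ} with hS
  have hsub : {M | N.reach M0 M} ⊆ (fun σ => N.fireSeq M0 σ) '' S := by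
    rintro M ⟨σ, hf, rfl⟩
    obtain ⟨σ', h1, h2, h3⟩ := exists_simple N M0 σ.length σ le_rfl hf
    exact ⟨σ', ⟨h1, h3⟩, h2⟩
  have hSinf : S.Infinite := Set.Infinite.of_image _ (hRinf.mono hsub)
  -- König construction
  set E : List T → Set (List T) := fun σ => {τ | τ ∈ S ∧ σ <+: τ} with hE
  have hE0 : (E []).Infinite := by
    apply hSinf.mono
    intro τ hτ
    exact ⟨hτ, List.nil_prefix⟩
  have step : ∀ σ : List T, (E σ).Infinite → ∃ t, (E (σ ++ [t])).Infinite := by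
    intro σ hinf
    by_contra h
    push_neg at h
    have hsub2 : E σ ⊆ insert σ (⋃ t ∈ (Finset.univ : Finset T), E (σ ++ [t])) := by
      rintro τ ⟨hτS, hpre⟩
      rcases eq_or_ne τ σ with rfl | hne
      · exact Set.mem_insert _ _
      obtain ⟨rest, rfl⟩ := hpre
      have hrest : rest ≠ [] := by rintro rfl; simp at hne
      obtain ⟨t, rest', rfl⟩ := List.exists_cons_of_ne_nil hrest
      refine Set.mem_insert_of_mem _ ?_
      exact Set.mem_biUnion (Finset.mem_univ t) ⟨hτS, ⟨rest', by simp⟩⟩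
    exact hinf (((Set.Finite.biUnion (Finset.univ : Finset T).finite_toSet
      (fun t _ => h t)).insert σ).subset hsub2)
  let f : ℕ → {σ : List T // (E σ).Infinite} := fun n =>
    Nat.rec ⟨[], hE0⟩ (fun _ ih =>
      ⟨ih.1 ++ [Classical.choose (step ih.1 ih.2)],
        Classical.choose_spec (step ih.1 ih.2)⟩) n
  have hlen : ∀ n, (f n).1.length = n := by
    intro n
    induction n with
    | zero => rfl
    | succ n ih =>
      show ((f n).1 ++ [Classical.choose (step (f n).1 (f n).2)]).length = n + 1
      simp [ih]
  have hpref : ∀ m n, m ≤ n → (f m).1 <+: (f n).1 := by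
    intro m n hmn
    induction n with
    | zero => cases Nat.le_zero.1 hmn; exact List.prefix_refl _
    | succ n ih =>
      rcases Nat.lt_or_ge m (n + 1) with h | h
      · exact (ih (Nat.lt_succ_iff.1 h)).trans ⟨_, rfl⟩
      · have : m = n + 1 := le_antisymm hmn h
        subst this; exact List.prefix_refl _
  set K : ℕ → (P → ℕ) := fun n => N.fireSeq M0 (f n).1 with hK
  -- key facts about the branch
  have hKfact : ∀ m n, m < n → K m ≠ K n ∧
      ∃ rest : List T, N.feasible (K m) rest ∧ N.fireSeq (K m) rest = K n ∧ rest ≠ [] := by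
    intro m n hmn
    obtain ⟨τ, ⟨⟨hτf, hτs⟩, hτpre⟩⟩ := (f n).2.nonempty
    have hfn_feas : N.feasible M0 (f n).1 := feasible_prefix N hτpre hτf
    obtain ⟨rest, hrest⟩ := hpref m n (le_of_lt hmn)
    have hne : K m ≠ K n := by
      have hm : (f m).1 = τ.take m := by
        have h1 : (f m).1 <+: τ := (hpref m n (le_of_lt hmn)).trans hτpre
        rw [List.prefix_iff_eq_take.1 h1, hlen]
      have hn : (f n).1 = τ.take n := by
        rw [List.prefix_iff_eq_take.1 hτpre, hlen]
      have hτlen : n ≤ τ.length := by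
        have := hτpre.length_le
        rw [hlen] at this
        exact this
      have := hτs m n hmn hτlen
      rw [hK]
      simp only [hm, hn]
      exact this
    refine ⟨hne, rest, ?_, ?_, ?_⟩
    · have := (N.feasible_append M0 (f m).1 rest).1 (hrest ▸ hfn_feas)
      exact this.2
    · rw [hK]
      simp only [← hrest, N.fireSeq_append]
    · rintro rfl
      apply hne
      have h2 : (f m).1 = (f n).1 := by rw [← hrest]; simp
      simp only [hK, h2]
  -- Dickson's lemma
  have hpwo : ∀ g : ℕ → (P → ℕ), (∀ n, g n ∈ (Set.univ : Set (P → ℕ))) →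
      ∃ i j, i < j ∧ g i ≤ g j := fun g _ => by
    obtain ⟨i, j, h1, h2⟩ := Set.isPWO_of_wellQuasiOrderedLE (Set.univ : Set (P → ℕ))
      (fun n => ⟨g n, Set.mem_univ _⟩)
    exact ⟨i, j, h1, h2⟩
  obtain ⟨i, j, hij, hle⟩ := hpwo K (fun n => Set.mem_univ _)
  obtain ⟨hne, rest, hfeas, hfire, hrne⟩ := hKfact i j hij
  refine ⟨fun t => rest.count t, ?_, ?_, ?_⟩
  · obtain ⟨t, rest', rfl⟩ := List.exists_cons_of_ne_nil hrne
    exact ⟨t, by simp⟩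
  · intro p
    show 0 ≤ ∑ t, N.incidence p t * ((rest.count t : ℕ) : ℤ)
    have := N.stateEq rest (K i) hfeas p
    rw [hfire] at this
    have hlep : (K i p : ℤ) ≤ (K j p : ℤ) := by exact_mod_cast hle p
    omega
  · have : ∃ p, K i p < K j p := by
      by_contra h
      push_neg at h
      exact hne (funext fun p => le_antisymm (hle p) (h p))
    obtain ⟨p, hp⟩ := this
    refine ⟨p, ?_⟩
    show 0 < ∑ t, N.incidence p t * ((rest.count t : ℕ) : ℤ)
    have := N.stateEq rest (K i) hfeas p
    rw [hfire] at this
    omega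

/-- a net is not structurally bounded iff there is a rational vector
`Y ≥ 0`, `Y ≠ 0`, with `I·Y ≥ 0` and `I·Y ≠ 0`. -/
theorem stmt10 {P T : Type} [Fintype P] [Fintype T] (N : PetriNet P T) :
    ¬ N.structBounded ↔
      ∃ Y : T → ℚ, (∀ t, 0 ≤ Y t) ∧ Y ≠ 0 ∧
        (∀ p, 0 ≤ ∑ t, (N.incidence p t : ℚ) * Y t) ∧
        (∃ p, ∑ t, (N.incidence p t : ℚ) * Y t ≠ 0) := by
  
  constructor
  · intro h
    have h' : ¬ ∀ M0 : P → ℕ, N.bounded M0 := h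
    push_neg at h'
    obtain ⟨M0, hub⟩ := h'
    obtain ⟨Y, ⟨t0, ht0⟩, hpos, ⟨p0, hp0⟩⟩ := exists_vec_of_unbounded N M0 hub
    have hcast : ∀ p, ((∑ t, N.incidence p t * (Y t : ℤ) : ℤ) : ℚ)
        = ∑ t, (N.incidence p t : ℚ) * ((Y t : ℕ) : ℚ) := by
      intro p; push_cast; rfl
    refine ⟨fun t => ((Y t : ℕ) : ℚ), fun t => by positivity, ?_, ?_, ⟨p0, ?_⟩⟩
    · intro hz
      apply ht0
      have h3 := congrFun hz t0
      simp only [Pi.zero_apply] at h3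
      exact_mod_cast h3
    · intro p
      rw [← hcast p]
      exact_mod_cast hpos p
    · rw [← hcast p0]
      exact_mod_cast hp0.ne'
  · rintro ⟨Y, hY, hYne, hpos, ⟨p0, hp0⟩⟩
    obtain ⟨Z, d, hd, hZ⟩ := scale Y hY
    have hcast : ∀ p, ((∑ t, N.incidence p t * (Z t : ℤ) : ℤ) : ℚ)
        = d * ∑ t, (N.incidence p t : ℚ) * Y t := by
      intro p
      push_cast
      rw [Finset.mul_sum]
      refine Finset.sum_congr rfl fun t _ => ?_
      rw [hZ t]; ring
    apply not_structBounded_of_vec N Z ?_ p0 ?_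
    · intro p
      have h2 : (0:ℚ) ≤ d * ∑ t, (N.incidence p t : ℚ) * Y t :=
        mul_nonneg (by positivity) (hpos p)
      rw [← hcast p] at h2
      exact_mod_cast h2
    · have h2 : (0:ℚ) < d * ∑ t, (N.incidence p0 t : ℚ) * Y t := by
        have hdq : (0:ℚ) < d := by exact_mod_cast hd
        exact mul_pos hdq (lt_of_le_of_ne (hpos p0) (Ne.symm hp0))
      rw [← hcast p0] at h2
      exact_mod_cast h2
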